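/- If n is odd and S is a nonempty subset of X such that either S ≠ X or m is odd, then there exists a profile u with the set of Borda winners at u exactly S. -/

import Mathlib

open Finset

/-- The Borda score `B(x,u) = Σ_i s(x,i,u)`, where `s(x,i,u)` is the rank of `x`
in individual `i`'s ordering, counted from 1 at the top.  A profile assigns to
each individual `i` a rank equivalence `u i : Fin m ≃ Fin m` (lower = better). -/
def bordaScore {m n : ℕ} (u : Fin n → (Fin m ≃ Fin m)) (x : Fin m) : ℕ :=
  ∑ i : Fin n, (((u i) x).val + 1)

/-- The Borda correspondence `G_B(u)`: alternatives with minimal Borda score. -/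
def bordaSet {m n : ℕ} (u : Fin n → (Fin m ≃ Fin m)) : Finset (Fin m) :=
  univ.filter (fun x => ∀ y : Fin m, bordaScore u x ≤ bordaScore u y)

noncomputable def natPerm (m : ℕ) (f : ℕ → ℕ) (hmap : ∀ v, v < m → f v < m)
    (hinj : ∀ a, a < m → ∀ b, b < m → f a = f b → a = b) : Fin m ≃ Fin m :=
  Equiv.ofBijective (fun x => ⟨f x.1, hmap x.1 x.2⟩)
    (Finite.injective_iff_bijective.mp
      (fun a b hab => Fin.val_injective (hinj a.1 a.2 b.1 b.2 (congrArg Fin.val hab))))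

lemma natPerm_apply (m : ℕ) (f : ℕ → ℕ) (hmap : ∀ v, v < m → f v < m)
    (hinj : ∀ a, a < m → ∀ b, b < m → f a = f b → a = b) (x : Fin m) :
    ((natPerm m f hmap hinj) x).val = f x.val := rfl

lemma tail_sum (m c x : ℕ) (hx : x < m) :
    ∑ j ∈ Finset.Ico 3 (3 + 2 * c), (if Odd j then x + 1 else m - x) = c * (m + 1) := by
  induction c with
  | zero => simp
  | succ c ih =>
    have h1 : 3 + 2 * (c + 1) = ((3 + 2 * c) + 1) + 1 := by ring
    rw [h1, Finset.sum_Ico_succ_top (by omega), Finset.sum_Ico_succ_top (by omega), ih]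
    have ho : Odd (3 + 2 * c) := ⟨c + 1, by ring⟩
    have he : ¬ Odd (3 + 2 * c + 1) := by simp [Nat.odd_iff] at ho ⊢; omega
    rw [if_pos ho, if_neg he]
    have : (c + 1) * (m + 1) = c * (m + 1) + (m + 1) := by ring
    rw [this]; omega

lemma master (m n : ℕ) (hm : 3 ≤ m) (c0 : ℕ) (hn : n = 3 + 2 * c0)
    (S : Finset (Fin m)) (s K : ℕ) (hs : 1 ≤ s) (hsK : s ≤ K) (hKm : K ≤ m)
    (r : Fin m ≃ Fin m) (hmem : ∀ x : Fin m, x ∈ S ↔ (r x).val < s)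
    (f1 f2 f3 : ℕ → ℕ)
    (hmap1 : ∀ v, v < m → f1 v < m) (hinj1 : ∀ a, a < m → ∀ b, b < m → f1 a = f1 b → a = b)
    (hmap2 : ∀ v, v < m → f2 v < m) (hinj2 : ∀ a, a < m → ∀ b, b < m → f2 a = f2 b → a = b)
    (hmap3 : ∀ v, v < m → f3 v < m) (hinj3 : ∀ a, a < m → ∀ b, b < m → f3 a = f3 b → a = b)
    (cst : ℕ) (hcK : cst < 3 * K)
    (hlow : ∀ v, v < s → f1 v + f2 v + f3 v = cst)
    (hmid : ∀ v, s ≤ v → v < K → cst < f1 v + f2 v + f3 v)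
    (hhigh : ∀ v, K ≤ v → v < m → f1 v + f2 v + f3 v = 3 * v) :
    ∃ u : Fin n → (Fin m ≃ Fin m), bordaSet u = S := by
  classical
  set P1 := r.trans (natPerm m f1 hmap1 hinj1) with hP1
  set P2 := r.trans (natPerm m f2 hmap2 hinj2) with hP2
  set P3 := r.trans (natPerm m f3 hmap3 hinj3) with hP3
  set revP := natPerm m (fun v => m - 1 - v) (fun v hv => by show m - 1 - v < m; omega)
    (fun a ha b hb hab => by beta_reduce at hab; omega) with hrev
  set u : Fin n → (Fin m ≃ Fin m) := fun i =>
    if (i : ℕ) = 0 then P1 else if (i : ℕ) = 1 then P2 else if (i : ℕ) = 2 then P3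
    else if Odd (i : ℕ) then Equiv.refl _ else revP with hu
  have hscore : ∀ x : Fin m,
      bordaScore u x = (f1 (r x).val + f2 (r x).val + f3 (r x).val) + 3 + c0 * (m + 1) := by
    intro x
    set G : ℕ → ℕ := fun j : ℕ => (if j = 0 then f1 (r x).val else if j = 1 then f2 (r x).val
          else if j = 2 then f3 (r x).val else if Odd j then x.val
          else m - 1 - x.val) + 1 with hGdef
    have hG : ∀ i : Fin n, ((u i) x).val + 1 = G i.val := by
      intro i
      by_cases h0 : (i : ℕ) = 0
      · simp only [hu, h0, if_pos, if_true]; rfl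
      · by_cases h1 : (i : ℕ) = 1
        · simp only [hu, h0, h1, if_neg, if_pos, if_false, if_true]; rfl
        · by_cases h2 : (i : ℕ) = 2
          · simp only [hu, h0, h1, h2, if_neg, if_pos, if_false, if_true]; rfl
          · by_cases h3 : Odd (i : ℕ)
            · simp only [hu, hGdef]
              rw [if_neg h0, if_neg h1, if_neg h2, if_pos h3,
                if_neg h0, if_neg h1, if_neg h2, if_pos h3]
              rfl
            · simp only [hu, hGdef]
              rw [if_neg h0, if_neg h1, if_neg h2, if_neg h3,
                if_neg h0, if_neg h1, if_neg h2, if_neg h3]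
              rfl
    rw [bordaScore, Finset.sum_congr rfl (fun i _ => hG i), Fin.sum_univ_eq_sum_range G n]
    rw [hn, Finset.range_eq_Ico, ← Finset.sum_Ico_consecutive _ (by omega : 0 ≤ 3) (by omega : 3 ≤ 3 + 2 * c0)]
    have e1 : ∑ j ∈ Finset.Ico 0 3, G j
        = f1 (r x).val + f2 (r x).val + f3 (r x).val + 3 := by
      rw [← Finset.range_eq_Ico]
      simp [Finset.sum_range_succ, hGdef]
      ring
    have e2 : ∑ j ∈ Finset.Ico 3 (3 + 2 * c0), G j = c0 * (m + 1) := by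
      rw [Finset.sum_congr rfl (fun j hj => ?_), tail_sum m c0 x.val x.isLt]
      have hj3 : 3 ≤ j := (Finset.mem_Ico.mp hj).1
      have hxm := x.isLt
      rw [hGdef]
      simp only []
      rw [if_neg (by omega), if_neg (by omega), if_neg (by omega)]
      by_cases hoj : Odd j
      · rw [if_pos hoj, if_pos hoj]
      · rw [if_neg hoj, if_neg hoj]; omega
    rw [e1, e2]
  refine ⟨u, ?_⟩
  ext x
  simp only [bordaSet, Finset.mem_filter, Finset.mem_univ, true_and]
  constructor
  · intro hx
    by_contra hxS
    have hw : s ≤ (r x).val := by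
      rcases lt_or_ge (r x).val s with h' | h'
      · exact absurd ((hmem x).mpr h') hxS
      · exact h'
    have hy := hx (r.symm ⟨0, by omega⟩)
    rw [hscore x, hscore (r.symm ⟨0, by omega⟩)] at hy
    have h0 : (r (r.symm (⟨0, by omega⟩ : Fin m))).val = 0 := by simp
    rw [h0] at hy
    have hc0' := hlow 0 hs
    rcases lt_or_ge (r x).val K with h2 | h2
    · have := hmid _ hw h2; omega
    · have := hhigh _ h2 (r x).isLt; omega
  · intro hxS y
    rw [hscore x, hscore y]
    have hwx : (r x).val < s := (hmem x).mp hxS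
    have h1 : f1 (r x).val + f2 (r x).val + f3 (r x).val = cst := hlow _ hwx
    rcases lt_or_ge (r y).val s with hy | hy
    · rw [h1, hlow _ hy]
    · rcases lt_or_ge (r y).val K with hy2 | hy2
      · have := hmid _ hy hy2; omega
      · have := hhigh _ hy2 (r y).isLt; omega

lemma exists_reindex (m : ℕ) (S : Finset (Fin m)) :
    ∃ r : Fin m ≃ Fin m, ∀ x, x ∈ S ↔ (r x).val < S.card := by
  classical
  have hk : S.card + (m - S.card) = m := by
    have := Finset.card_le_univ S
    simp [Fintype.card_fin] at this
    omega
  have e2 : {x : Fin m // x ∉ S} ≃ Fin (m - S.card) := by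
    refine (Equiv.subtypeEquivRight (q := fun x => x ∈ Sᶜ) ?_).trans
      ((Sᶜ).equivFin.trans (finCongr ?_))
    · intro x; simp
    · simp [Finset.card_compl]
  refine ⟨(Equiv.sumCompl (· ∈ S)).symm.trans
    ((S.equivFin.sumCongr e2).trans (finSumFinEquiv.trans (finCongr hk))), fun x => ?_⟩
  by_cases hx : x ∈ S
  · simp [hx, Equiv.sumCompl_symm_apply_of_pos hx]
  · simp [hx, Equiv.sumCompl_symm_apply_of_neg hx]


/-- If `n` is odd and `S` is a nonempty subset of `X` such that either `S ≠ X`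
or `m` is odd, then `S` is in the range of the Borda correspondence. -/
theorem borda_range_odd (m n : ℕ) (hm : 3 ≤ m) (hn : 2 ≤ n) (hno : Odd n)
    (S : Finset (Fin m)) (hS : S.Nonempty) (h : S ≠ univ ∨ Odd m) :
    ∃ u : Fin n → (Fin m ≃ Fin m), bordaSet u = S := by
  classical
  obtain ⟨c0, hc0⟩ : ∃ c, n = 3 + 2 * c := by
    obtain ⟨c, hc⟩ := hno
    exact ⟨c - 1, by omega⟩
  obtain ⟨r, hr⟩ := exists_reindex m S
  have hk1 : 1 ≤ S.card := Finset.card_pos.mpr hS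
  have hkm : S.card ≤ m := by
    have := Finset.card_le_univ S
    simpa using this
  rcases Nat.even_or_odd S.card with hke | hko
  · -- S.card even
    obtain ⟨t, ht⟩ : ∃ t, S.card = 2 * t := hke.exists_two_nsmul _
    have hkm' : S.card < m := by
      rcases lt_or_eq_of_le hkm with h' | h'
      · exact h'
      · exfalso
        rcases h with h | h
        · apply h
          apply Finset.eq_univ_of_card
          simpa using h'
        · rw [h'] at hke
          exact (Nat.not_odd_iff_even.mpr hke) h
    have ht1 : 1 ≤ t := by omega
    exact master m n hm c0 hc0 S (2 * t) (2 * t + 1) (by omega) (by omega) (by omega) r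
      (fun x => by rw [hr x, ht])
      id
      (fun v => if v < t then 2 * t - 2 - 2 * v else if v < 2 * t then 4 * t - 1 - 2 * v
        else if v = 2 * t then 2 * t else v)
      (fun v => if v < t then v + t + 1 else if v < 2 * t + 1 then v - t else v)
      (fun v hv => by simp only [id]; omega)
      (fun a ha b hb hab => by simp only [id] at hab; omega)
      (fun v hv => by beta_reduce; split_ifs <;> omega)
      (fun a ha b hb hab => by beta_reduce at hab; split_ifs at hab <;> omega)
      (fun v hv => by beta_reduce; split_ifs <;> omega)
      (fun a ha b hb hab => by beta_reduce at hab; split_ifs at hab <;> omega)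
      (3 * t - 1) (by omega)
      (fun v hv => by simp only [id]; split_ifs <;> omega)
      (fun v hv1 hv2 => by simp only [id]; split_ifs <;> omega)
      (fun v hv1 hv2 => by simp only [id]; split_ifs <;> omega)
  · -- S.card odd
    obtain ⟨t, ht⟩ := hko
    exact master m n hm c0 hc0 S (2 * t + 1) (2 * t + 1) (by omega) (by omega) (by omega) r
      (fun x => by rw [hr x, ht])
      id
      (fun v => if v ≤ t then 2 * t - 2 * v else if v < 2 * t + 1 then 4 * t + 1 - 2 * v else v)
      (fun v => if v ≤ t then v + t else if v < 2 * t + 1 then v - t - 1 else v)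
      (fun v hv => by simp only [id]; omega)
      (fun a ha b hb hab => by simp only [id] at hab; omega)
      (fun v hv => by beta_reduce; split_ifs <;> omega)
      (fun a ha b hb hab => by beta_reduce at hab; split_ifs at hab <;> omega)
      (fun v hv => by beta_reduce; split_ifs <;> omega)
      (fun a ha b hb hab => by beta_reduce at hab; split_ifs at hab <;> omega)
      (3 * t) (by omega)
      (fun v hv => by simp only [id]; split_ifs <;> omega)
      (fun v hv1 hv2 => by omega)
      (fun v hv1 hv2 => by simp only [id]; split_ifs <;> omega)
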